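/- The generalized hypergeometric series ₄F₃(3/2, 2, 2, 2; 1, 13/8, 17/8; 1/4) equals (5/1024)·( 88 + 63√2·π + 4·3^{1/4}·arctan(3^{−1/4}) + 126√2·arcoth √2 + 4·3^{1/4}·arcoth(3^{1/4}) ). -/

import Mathlib

open Real MeasureTheory intervalIntegral

noncomputable def poch (a : ℝ) (n : ℕ) : ℝ := Polynomial.eval a (ascPochhammer ℝ n)

noncomputable def arcoth (x : ℝ) : ℝ := (1/2) * Real.log ((x + 1)/(x - 1))


noncomputable def K (q : ℕ) : ℝ := ∫ u in (0:ℝ)..1, (1-u^4)^q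

lemma K_cont (q : ℕ) : Continuous fun u : ℝ => (1-u^4)^q := by continuity

lemma K_pos (q : ℕ) : 0 < K q := by
  apply intervalIntegral.intervalIntegral_pos_of_pos_on
    ((K_cont q).intervalIntegrable 0 1)
  · intro x hx
    have h1 : x^4 < 1 := pow_lt_one₀ (le_of_lt hx.1) hx.2 (by norm_num)
    exact pow_pos (by linarith) q
  · norm_num

lemma K_le_one (q : ℕ) : K q ≤ 1 := by
  have : K q ≤ ∫ u in (0:ℝ)..1, (1:ℝ) := by
    apply intervalIntegral.integral_mono_on (by norm_num)
      ((K_cont q).intervalIntegrable 0 1)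
      (intervalIntegrable_const)
    intro x hx
    have h1 : x^4 ≤ 1 := pow_le_one₀ hx.1 hx.2
    have h0 : (0:ℝ) ≤ x^4 := by positivity
    exact pow_le_one₀ (by linarith) (by linarith)
  simpa using this

lemma K_rec (q : ℕ) : (4*(q:ℝ)+5) * K (q+1) = (4*q+4) * K q := by
  have h : ∀ u ∈ Set.uIcc (0:ℝ) 1, HasDerivAt (fun u : ℝ => u*(1-u^4)^(q+1))
      ((4*(q:ℝ)+5) * (1-u^4)^(q+1) - (4*q+4) * (1-u^4)^q) u := by
    intro u _
    exact ((hasDerivAt_id u).mul (((hasDerivAt_pow 4 u).const_sub 1).pow (q+1))).congr_deriv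
      (by simp only [id_eq, Pi.pow_apply, Pi.mul_apply]; push_cast; rw [pow_succ]; ring)
  have h2 := intervalIntegral.integral_eq_sub_of_hasDerivAt h
    (((continuous_const.mul (K_cont (q+1))).sub
      (continuous_const.mul (K_cont q))).intervalIntegrable 0 1)
  have h3 : (∫ u in (0:ℝ)..1, ((4*(q:ℝ)+5) * (1-u^4)^(q+1) - (4*q+4) * (1-u^4)^q))
      = (4*(q:ℝ)+5) * K (q+1) - (4*q+4) * K q := by
    rw [intervalIntegral.integral_sub (((K_cont (q+1)).intervalIntegrable 0 1).const_mul _)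
      (((K_cont q).intervalIntegrable 0 1).const_mul _),
      intervalIntegral.integral_const_mul, intervalIntegral.integral_const_mul]
    rfl
  rw [h3] at h2
  norm_num at h2
  linarith

lemma poch_zero (a : ℝ) : poch a 0 = 1 := by simp [poch]

lemma poch_succ (a : ℝ) (n : ℕ) : poch a (n+1) = poch a n * (a + n) := by
  simp [poch, ascPochhammer_succ_eval]

lemma poch_pos {a : ℝ} (ha : 0 < a) (n : ℕ) : 0 < poch a n := ascPochhammer_pos n a ha

noncomputable def T (n : ℕ) : ℝ :=
  (poch (3/2) n * poch (2) n * poch (2) n * poch (2) n) /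
    (poch (1) n * poch (13/8) n * poch (17/8) n * (Nat.factorial n : ℝ)) * (1/4 : ℝ) ^ n

lemma term_eq (n : ℕ) : T n = (45/8) * ((n:ℝ)+1)^2 * (1/4)^(n+1) * K (2*n+2) := by
  induction n with
  | zero =>
    have h0 : K 0 = 1 := by simp [K]
    have h1 := K_rec 0
    have h2 := K_rec 1
    norm_num at h1 h2
    simp only [T, poch_zero]
    norm_num
    linarith
  | succ n ih =>
    have hne : ∀ (a : ℝ), 0 < a → poch a n ≠ 0 := fun a ha => (poch_pos ha n).ne'
    have hTs : T (n+1) = T n *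
        ((3/2+n) * (2+n)^3 / ((1+n)^2 * (13/8+n) * (17/8+n)) * (1/4)) := by
      simp only [T, poch_succ, Nat.factorial_succ, pow_succ]
      push_cast
      field_simp
      ring
    rw [hTs, ih]
    have h1 := K_rec (2*n+2)
    have h2 := K_rec (2*n+3)
    have hK2 : (0:ℝ) < K (2*n+2) := K_pos _
    have d1 : (8*(n:ℝ)+13) ≠ 0 := by positivity
    have d2 : (8*(n:ℝ)+17) ≠ 0 := by positivity
    push_cast at h1 h2
    have hA : K (2*n+3) = (8*(n:ℝ)+12)/(8*n+13) * K (2*n+2) := by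
      field_simp
      linarith
    have hB : K (2*n+3+1) = (8*(n:ℝ)+16)/(8*n+17) * K (2*n+3) := by
      field_simp
      linarith
    have e4 : 2*(n+1)+2 = (2*n+3)+1 := by ring
    rw [e4, hB, hA]
    push_cast
    rw [pow_succ]
    have hne2 : ((n:ℝ)+1) ≠ 0 := by positivity
    field_simp
    ring


lemma sq_geom {y : ℝ} (h : |y| < 1) :
    ∑' n : ℕ, (n:ℝ)^2 * y^n = y*(1+y)/(1-y)^3 := by
  have hn : ‖y‖ < 1 := by rwa [Real.norm_eq_abs]
  have h1y : (1:ℝ) - y ≠ 0 := by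
    have := abs_lt.mp h
    intro hc; linarith
  have hs2 : Summable (fun n : ℕ => (n:ℝ)^2 * y^n) :=
    summable_pow_mul_geometric_of_norm_lt_one 2 hn
  have hs1 : Summable (fun n : ℕ => (n:ℝ) * y^n) := by
    have := summable_pow_mul_geometric_of_norm_lt_one 1 hn (R := ℝ)
    simpa using this
  have hs0 : Summable (fun n : ℕ => y^n) := summable_geometric_of_norm_lt_one hn
  have T1 : ∑' n : ℕ, (n:ℝ) * y^n = y / (1-y)^2 :=
    tsum_coe_mul_geometric_of_norm_lt_one hn
  have T0 : ∑' n : ℕ, y^n = (1-y)⁻¹ := tsum_geometric_of_norm_lt_one hn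
  set A := ∑' n : ℕ, (n:ℝ)^2 * y^n with hA
  have step : A = y * (A + 2*(y/(1-y)^2) + (1-y)⁻¹) := by
    conv_lhs => rw [hA, Summable.tsum_eq_zero_add hs2]
    push_cast
    rw [show ((0:ℝ))^2 * y^0 = 0 by norm_num, zero_add]
    have e1 : ∀ n : ℕ, ((n:ℝ)+1)^2 * y^(n+1) = y * ((n:ℝ)^2*y^n + (2*((n:ℝ)*y^n) + y^n)) := by
      intro n; rw [pow_succ]; ring
    rw [tsum_congr e1, tsum_mul_left, Summable.tsum_add hs2 ((hs1.mul_left 2).add hs0),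
      Summable.tsum_add (hs1.mul_left 2) hs0, tsum_mul_left, T1, T0]
    rw [← hA]; ring
  have key : A * (1-y)^4 = y*(1+y)*(1-y) := by
    field_simp at step
    linear_combination (1-y)*step
  rw [eq_div_iff (pow_ne_zero 3 h1y)]
  apply mul_right_cancel₀ h1y
  linear_combination key


noncomputable def fF (n : ℕ) (u : ℝ) : ℝ := (45/8)*((n:ℝ)+1)^2*(1/4:ℝ)^(n+1)*(1-u^4)^(2*n+2)

lemma fF_cont (n : ℕ) : Continuous (fF n) := by unfold fF; fun_prop

lemma fF_nonneg (n : ℕ) {u : ℝ} (hu : u ∈ Set.Ioc (0:ℝ) 1) : 0 ≤ fF n u := by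
  have h1 : u^4 ≤ 1 := pow_le_one₀ (n:=4) hu.1.le hu.2
  unfold fF
  apply mul_nonneg (by positivity) (pow_nonneg (by linarith) _)

lemma bound_summable : Summable (fun n : ℕ => (45/8:ℝ)*((n:ℝ)+1)^2*(1/4:ℝ)^(n+1)) := by
  have h := summable_pow_mul_geometric_of_norm_lt_one (R := ℝ) 2 (r := 1/4) (by norm_num)
  have h2 := ((summable_nat_add_iff 1).mpr h).mul_left (45/8 : ℝ)
  apply h2.congr
  intro n; push_cast; ring

lemma swap :
    ∑' n : ℕ, (∫ u in Set.Ioc (0:ℝ) 1, fF n u)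
      = ∫ u in Set.Ioc (0:ℝ) 1, (∑' n : ℕ, fF n u) := by
  apply MeasureTheory.integral_tsum_of_summable_integral_norm
    (fun n => (fF_cont n).integrableOn_Ioc)
  apply Summable.of_nonneg_of_le (fun n => integral_nonneg (fun u => norm_nonneg _))
    ?_ bound_summable
  intro n
  have hb : ∀ u ∈ Set.Ioc (0:ℝ) 1, ‖fF n u‖ ≤ (45/8:ℝ)*((n:ℝ)+1)^2*(1/4:ℝ)^(n+1) := by
    intro u hu
    rw [Real.norm_of_nonneg (fF_nonneg n hu)]
    unfold fF
    have h0 : (0:ℝ) ≤ 1 - u^4 := by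
      have := pow_le_one₀ (n:=4) hu.1.le hu.2; linarith
    have h2 : (1-u^4)^(2*n+2) ≤ 1 := pow_le_one₀ h0 (by nlinarith [pow_pos hu.1 4])
    nlinarith [sq_nonneg ((n:ℝ)+1), pow_pos (show (0:ℝ) < 1/4 by norm_num) (n+1), h2,
      mul_pos (mul_pos (show (0:ℝ) < 45/8 by norm_num) (sq_nonneg ((n:ℝ)+1) |>.lt_of_ne' (by positivity))) (pow_pos (show (0:ℝ) < 1/4 by norm_num) (n+1))]
  calc ∫ u in Set.Ioc (0:ℝ) 1, ‖fF n u‖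
      ≤ ∫ _u in Set.Ioc (0:ℝ) 1, (45/8:ℝ)*((n:ℝ)+1)^2*(1/4:ℝ)^(n+1) := by
        apply setIntegral_mono_on ((fF_cont n).norm.integrableOn_Ioc)
          (integrableOn_const measure_Ioc_lt_top.ne) measurableSet_Ioc hb
    _ = (45/8:ℝ)*((n:ℝ)+1)^2*(1/4:ℝ)^(n+1) := by
        simp [Measure.restrict_apply]


lemma L1_deriv (s : ℝ) (hs : s^2 = 2) (u : ℝ) :
    HasDerivAt (fun u : ℝ => s/8*(Real.log (u^2+s*u+1) - Real.log (u^2-s*u+1)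
      + 2*Real.arctan (s*u+1) + 2*Real.arctan (s*u-1))) (1/(1+u^4)) u := by
  have hp1 : (0:ℝ) < u^2+s*u+1 := by nlinarith [sq_nonneg (2*u+s), sq_nonneg u]
  have hp2 : (0:ℝ) < u^2-s*u+1 := by nlinarith [sq_nonneg (2*u-s), sq_nonneg u]
  have hq1 : HasDerivAt (fun u : ℝ => u^2+s*u+1) (2*u+s) u := by
    have := ((hasDerivAt_pow 2 u).add ((hasDerivAt_id u).const_mul s)).add_const 1
    exact this.congr_deriv (by simp; try ring)
  have hq2 : HasDerivAt (fun u : ℝ => u^2-s*u+1) (2*u-s) u := by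
    have := ((hasDerivAt_pow 2 u).sub ((hasDerivAt_id u).const_mul s)).add_const 1
    exact this.congr_deriv (by simp; try ring)
  have ha1 : HasDerivAt (fun u : ℝ => Real.arctan (s*u+1)) (s/(1+(s*u+1)^2)) u := by
    have := (((hasDerivAt_id u).const_mul s).add_const 1).arctan
    exact this.congr_deriv (by simp; try ring)
  have ha2 : HasDerivAt (fun u : ℝ => Real.arctan (s*u-1)) (s/(1+(s*u-1)^2)) u := by
    have := (((hasDerivAt_id u).const_mul s).sub_const 1).arctan
    exact this.congr_deriv (by simp; try ring)
  have hl1 := hq1.log hp1.ne'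
  have hl2 := hq2.log hp2.ne'
  have H := (((hl1.sub hl2).add (ha1.const_mul 2)).add (ha2.const_mul 2)).const_mul (s/8)
  apply H.congr_deriv
  have e1 : (0:ℝ) < 1+(s*u+1)^2 := by positivity
  have e2 : (0:ℝ) < 1+(s*u-1)^2 := by positivity
  have e3 : (0:ℝ) < 1+u^4 := by positivity
  have hs4 : s^4 = 4 := by rw [show s^4 = (s^2)^2 by ring, hs]; norm_num
  have hs6 : s^6 = 8 := by rw [show s^6 = (s^2)^3 by ring, hs]; norm_num
  have hp1' := hp1.ne'
  have hp2' := hp2.ne'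
  have e1' : 1+(s*u+1)^2 = 2*(u^2+s*u+1) := by linear_combination u^2*hs
  have e2' : 1+(s*u-1)^2 = 2*(u^2-s*u+1) := by linear_combination u^2*hs
  have hPQ : (u^2+s*u+1)*(u^2-s*u+1) = 1+u^4 := by linear_combination (-u^2)*hs
  rw [e1', e2', ← hPQ]
  have h1 : u*(u+s)+1 ≠ 0 := by rw [show u*(u+s)+1 = u^2+s*u+1 by ring]; exact hp1'
  have h2 : u*(u-s)+1 ≠ 0 := by rw [show u*(u-s)+1 = u^2-s*u+1 by ring]; exact hp2'
  field_simp
  linear_combination 4*hs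

lemma L2_deriv (c : ℝ) (hc4 : c^4 = 3) (hc1 : 1 < c) (u : ℝ) (hu : u ∈ Set.uIcc (0:ℝ) 1) :
    HasDerivAt (fun u : ℝ => 1/(4*c^3)*(Real.log (c+u) - Real.log (c-u))
      + 1/(2*c^3)*Real.arctan (u/c)) (1/(3-u^4)) u := by
  rw [Set.uIcc_of_le (by norm_num)] at hu
  have hc0 : (0:ℝ) < c := by linarith
  have hcu1 : (0:ℝ) < c + u := by linarith [hu.1]
  have hcu2 : (0:ℝ) < c - u := by linarith [hu.2]
  have hl1 : HasDerivAt (fun u : ℝ => Real.log (c+u)) (1/(c+u)) u := by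
    have := ((hasDerivAt_id u).const_add c).log hcu1.ne'
    exact this.congr_deriv (by simp)
  have hl2 : HasDerivAt (fun u : ℝ => Real.log (c-u)) (-(1/(c-u))) u := by
    have := ((hasDerivAt_id u).const_sub c).log hcu2.ne'
    exact this.congr_deriv (by simp; try ring)
  have ha : HasDerivAt (fun u : ℝ => Real.arctan (u/c)) ((1/c)/(1+(u/c)^2)) u := by
    have := ((hasDerivAt_id u).div_const c).arctan
    exact this.congr_deriv (by simp [div_eq_mul_inv]; try ring)
  have H := (((hl1.sub hl2).const_mul (1/(4*c^3))).add (ha.const_mul (1/(2*c^3))))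
  apply H.congr_deriv
  have e0 : (0:ℝ) < 1+(u/c)^2 := by positivity
  have e1 : u^4 < 3 := by
    have h1 : u^4 ≤ 1 := pow_le_one₀ (n:=4) hu.1 hu.2
    linarith
  have hc3 : c^3 ≠ 0 := by positivity
  have hcs : c*c ≠ 0 := by positivity
  have hs3 : (3:ℝ) - u^4 ≠ 0 := by linarith
  have hc8 : c^8 = 9 := by rw [show c^8 = (c^4)^2 by ring, hc4]; norm_num
  have hc7 : c^7 = 3*c^3 := by rw [show c^7 = c^4*c^3 by ring, hc4]
  have hc11 : c^11 = 9*c^3 := by rw [show c^11 = (c^4)^2*c^3 by ring, hc4]; norm_num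
  field_simp
  ring_nf
  simp only [hc7, hc11]
  ring

noncomputable def FF (s c : ℝ) (u : ℝ) : ℝ :=
  (96*u - 55*u^5 - 2*u^9 + 5*u^13)/(144*((1+u^4)^2*(3-u^4)^2))
  + 7/64*(s/8*(Real.log (u^2+s*u+1) - Real.log (u^2-s*u+1)
      + 2*Real.arctan (s*u+1) + 2*Real.arctan (s*u-1)))
  + 1/192*(1/(4*c^3)*(Real.log (c+u) - Real.log (c-u)) + 1/(2*c^3)*Real.arctan (u/c))

lemma FF_deriv (s c : ℝ) (hs : s^2 = 2) (hc4 : c^4 = 3) (hc1 : 1 < c)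
    (u : ℝ) (hu : u ∈ Set.uIcc (0:ℝ) 1) :
    HasDerivAt (FF s c)
      ((1-u^4)^2*((1-u^4)^2+4)/((1+u^4)^3*(3-u^4)^3)) u := by
  have hu' : u ∈ Set.Icc (0:ℝ) 1 := by rwa [Set.uIcc_of_le (by norm_num)] at hu
  have e1 : u^4 < 3 := by
    have h1 : u^4 ≤ 1 := pow_le_one₀ (n:=4) hu'.1 hu'.2
    linarith
  have e2 : (0:ℝ) < 1 + u^4 := by positivity
  have hDne : (144:ℝ)*((1+u^4)^2*(3-u^4)^2) ≠ 0 := by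
    have : (0:ℝ) < 3 - u^4 := by linarith
    positivity
  have hn : HasDerivAt (fun u : ℝ => 96*u - 55*u^5 - 2*u^9 + 5*u^13)
      (96 - 275*u^4 - 18*u^8 + 65*u^12) u := by
    have := ((((hasDerivAt_id u).const_mul 96).sub ((hasDerivAt_pow 5 u).const_mul 55)).sub
      ((hasDerivAt_pow 9 u).const_mul 2)).add ((hasDerivAt_pow 13 u).const_mul 5)
    exact this.congr_deriv (by simp; ring)
  have hden1 : HasDerivAt (fun u : ℝ => (1+u^4)^2) (2*(1+u^4)*(4*u^3)) u := by
    have := ((hasDerivAt_pow 4 u).const_add 1).pow 2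
    exact this.congr_deriv (by simp; try ring)
  have hden2 : HasDerivAt (fun u : ℝ => (3-u^4)^2) (-(2*(3-u^4)*(4*u^3))) u := by
    have := ((hasDerivAt_pow 4 u).const_sub 3).pow 2
    exact this.congr_deriv (by simp; try ring)
  have hD : HasDerivAt (fun u : ℝ => 144*((1+u^4)^2*(3-u^4)^2))
      (144*((2*(1+u^4)*(4*u^3))*(3-u^4)^2 + (1+u^4)^2*(-(2*(3-u^4)*(4*u^3))))) u :=
    (hden1.mul hden2).const_mul 144
  have hrat := hn.div hD hDne
  have H := ((hrat.add ((L1_deriv s hs u).const_mul (7/64))).add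
    ((L2_deriv c hc4 hc1 u hu).const_mul (1/192)))
  have Hfn : (fun u : ℝ => (96*u - 55*u^5 - 2*u^9 + 5*u^13)/(144*((1+u^4)^2*(3-u^4)^2))
      + 7/64*(s/8*(Real.log (u^2+s*u+1) - Real.log (u^2-s*u+1)
      + 2*Real.arctan (s*u+1) + 2*Real.arctan (s*u-1)))
      + 1/192*(1/(4*c^3)*(Real.log (c+u) - Real.log (c-u)) + 1/(2*c^3)*Real.arctan (u/c)))
      = FF s c := rfl
  rw [← Hfn]
  apply H.congr_deriv
  have h3 : (3:ℝ) - u^4 ≠ 0 := by linarith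
  have h1 : (1:ℝ) + u^4 ≠ 0 := by positivity
  field_simp
  ring




lemma mySumClosed {u : ℝ} (hu : u ∈ Set.Ioc (0:ℝ) 1) :
    ∑' n : ℕ, fF n u = 45/2*((1-u^4)^2*((1-u^4)^2+4)/((1+u^4)^3*(3-u^4)^3)) := by
  set y : ℝ := (1-u^4)^2/4 with hy
  have hu4 : 0 < u^4 := pow_pos hu.1 4
  have hu41 : u^4 ≤ 1 := pow_le_one₀ (n:=4) hu.1.le hu.2
  have hw : 0 ≤ 1 - u^4 := by linarith
  have hw1 : 1 - u^4 < 1 := by linarith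
  have hyabs : |y| < 1 := by
    rw [abs_of_nonneg (by positivity)]
    rw [hy]
    nlinarith
  have hfe : ∀ n : ℕ, fF n u = (45/8)*(((n:ℝ)+1)^2 * y^(n+1)) := by
    intro n
    rw [hy, div_pow, ← pow_mul]
    unfold fF
    rw [show (4:ℝ)^(n+1) = 4^(n+1) from rfl]
    have : (1/4:ℝ)^(n+1) = 1/(4:ℝ)^(n+1) := by rw [div_pow]; norm_num
    rw [this, show 2*(n+1) = 2*n+2 by ring]
    ring
  rw [tsum_congr hfe, tsum_mul_left]
  have hs2 : Summable (fun n : ℕ => (n:ℝ)^2 * y^n) :=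
    summable_pow_mul_geometric_of_norm_lt_one 2 (by rwa [Real.norm_eq_abs])
  have hshift : ∑' n : ℕ, ((n:ℝ)+1)^2 * y^(n+1) = y*(1+y)/(1-y)^3 := by
    rw [← sq_geom hyabs, Summable.tsum_eq_zero_add hs2]
    push_cast
    norm_num
  rw [hshift, hy]
  have h1 : (1:ℝ) + u^4 ≠ 0 := by positivity
  have h3 : (3:ℝ) - u^4 ≠ 0 := by intro h; nlinarith
  have hfac : (1:ℝ) - (1-u^4)^2/4 = (1+u^4)*(3-u^4)/4 := by ring
  rw [hfac]
  field_simp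
  ring


lemma hval (n : ℕ) : ∫ u in Set.Ioc (0:ℝ) 1, fF n u
    = (45/8)*((n:ℝ)+1)^2*(1/4:ℝ)^(n+1)*K (2*n+2) := by
  rw [← intervalIntegral.integral_of_le (by norm_num : (0:ℝ) ≤ 1)]
  have hre : fF n = fun u : ℝ => ((45/8)*((n:ℝ)+1)^2*(1/4:ℝ)^(n+1)) * (1-u^4)^(2*n+2) := by
    funext u; unfold fF; ring
  rw [hre, intervalIntegral.integral_const_mul]
  unfold K
  ring

noncomputable def gfun (u : ℝ) : ℝ :=
  45/2*((1-u^4)^2*((1-u^4)^2+4)/((1+u^4)^3*(3-u^4)^3))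

lemma gfun_contOn : ContinuousOn gfun (Set.uIcc (0:ℝ) 1) := by
  apply ContinuousOn.mul continuousOn_const
  apply ContinuousOn.div (by fun_prop) (by fun_prop)
  intro x hx
  rw [Set.uIcc_of_le (by norm_num)] at hx
  have h1 : x^4 ≤ 1 := pow_le_one₀ (n:=4) hx.1 hx.2
  have h2 : (0:ℝ) < 3 - x^4 := by linarith
  positivity

theorem stmt_14 :
    ∑' n : ℕ, (poch (3/2) n * poch (2) n * poch (2) n * poch (2) n) / (poch (1) n * poch (13/8) n * poch (17/8) n * (Nat.factorial n : ℝ)) * (1/4 : ℝ) ^ n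
      = 5/1024 * (88 + 63 * Real.sqrt 2 * Real.pi
          + 4 * (3:ℝ) ^ ((1:ℝ)/4) * Real.arctan ((3:ℝ) ^ (-(1:ℝ)/4))
          + 126 * Real.sqrt 2 * arcoth (Real.sqrt 2)
          + 4 * (3:ℝ) ^ ((1:ℝ)/4) * arcoth ((3:ℝ) ^ ((1:ℝ)/4))) := by
  set s : ℝ := Real.sqrt 2 with hsdef
  set c : ℝ := (3:ℝ) ^ ((1:ℝ)/4) with hcdef
  have hs : s^2 = 2 := Real.sq_sqrt (by norm_num)
  have hs0 : 0 < s := Real.sqrt_pos.mpr (by norm_num)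
  have hs1 : 1 < s := by nlinarith
  have hs2lt : s < 2 := by nlinarith
  have hc1 : 1 < c := by
    rw [hcdef]
    exact (Real.one_lt_rpow_iff_of_pos (by norm_num)).mpr (Or.inl ⟨by norm_num, by norm_num⟩)
  have hc0 : 0 < c := by linarith
  have hc4 : c^4 = 3 := by
    rw [hcdef, ← Real.rpow_natCast ((3:ℝ)^((1:ℝ)/4)) 4, ← Real.rpow_mul (by norm_num)]
    norm_num
  -- step 1: rewrite as integrals
  have step1 : (∑' n : ℕ, T n) = ∑' n : ℕ, ∫ u in Set.Ioc (0:ℝ) 1, fF n u := by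
    apply tsum_congr
    intro n
    rw [term_eq n, hval n]
  -- step 3: integral of gfun
  have step3 : ∫ u in Set.Ioc (0:ℝ) 1, (∑' n : ℕ, fF n u) = ∫ u in Set.Ioc (0:ℝ) 1, gfun u := by
    apply MeasureTheory.setIntegral_congr_fun measurableSet_Ioc
    intro u hu
    exact mySumClosed hu
  -- step 4: FTC
  have step4 : ∫ u in Set.Ioc (0:ℝ) 1, gfun u = 45/2 * FF s c 1 - 45/2 * FF s c 0 := by
    rw [← intervalIntegral.integral_of_le (by norm_num : (0:ℝ) ≤ 1)]
    have hderiv : ∀ u ∈ Set.uIcc (0:ℝ) 1, HasDerivAt (fun u => 45/2 * FF s c u) (gfun u) u := by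
      intro u hu
      exact ((FF_deriv s c hs hc4 hc1 u hu).const_mul (45/2)).congr_deriv rfl
    exact intervalIntegral.integral_eq_sub_of_hasDerivAt hderiv
      (gfun_contOn.intervalIntegrable)
  -- evaluate endpoints
  have hFF0 : FF s c 0 = 0 := by
    unfold FF
    norm_num [Real.arctan_neg, Real.arctan_one]
  have harctan : Real.arctan (s*1+1) + Real.arctan (s*1-1) = π/2 := by
    have hinv : s*1-1 = (s*1+1)⁻¹ := by
      exact (inv_eq_of_mul_eq_one_right (by linear_combination hs)).symm
    rw [hinv, Real.arctan_inv_of_pos (by nlinarith)]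
    ring
  have hlog1 : Real.log ((1:ℝ)^2+s*1+1) - Real.log ((1:ℝ)^2-s*1+1) = 2 * arcoth s := by
    have ha : ((1:ℝ)^2+s*1+1) = s+2 := by ring
    have hb : ((1:ℝ)^2-s*1+1) = 2-s := by ring
    rw [ha, hb, ← Real.log_div (by linarith) (by linarith)]
    have hd : (s+2)/(2-s) = (s+1)/(s-1) := by
      rw [div_eq_div_iff (by linarith) (by linarith)]
      linear_combination 2*hs
    rw [hd]
    unfold arcoth
    ring
  have hlog2 : Real.log (c+1) - Real.log (c-1) = 2 * arcoth c := by
    rw [← Real.log_div (by linarith) (by linarith)]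
    unfold arcoth
    ring
  have hratan : (3:ℝ) ^ (-(1:ℝ)/4) = 1/c := by
    rw [neg_div, Real.rpow_neg (by norm_num), ← hcdef, one_div]
  -- final computation
  show (∑' n : ℕ, T n) = _
  rw [step1, swap, step3, step4, hFF0]
  unfold FF
  rw [hlog1, hratan]
  have hc3 : c^3 ≠ 0 := by positivity
  have harc : 2*Real.arctan (s*1+1) + 2*Real.arctan (s*1-1) = π := by linarith
  have hsub : Real.arctan (s*1-1) = π/2 - Real.arctan (s*1+1) := by linarith
  rw [hsub]
  rw [show Real.log (c+(1:ℝ)) - Real.log (c-(1:ℝ)) = 2 * arcoth c from hlog2]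
  rw [show (1:ℝ)/c = c⁻¹ from one_div c]
  have hc5 : c^5 = 3*c := by rw [show c^5 = c^4*c by ring, hc4]
  have hc7 : c^7 = 3*c^3 := by rw [show c^7 = c^4*c^3 by ring, hc4]
  field_simp
  ring_nf
  simp only [hc4, hc5, hc7]
  ring
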